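/- There exist a ℚ(q)-algebra homomorphism Δ: U⁺ → U⁺ ⊗ U⁺ with Δ(E_i) = K_{α_i} ⊗ E_i + E_i ⊗ K_{α_i - γ_i} and Δ(K_λ) = K_λ ⊗ K_λ, a ℚ(q)-algebra homomorphism ε: U⁺ → ℚ(q) with ε(E_i) = 0 and ε(K_λ) = 1, and a ℚ(q)-algebra anti-homomorphism S: U⁺ → U⁺ with S(E_i) = -K_{-α_i}·E_i·K_{γ_i - α_i} and S(K_λ) = K_{-λ}, and these maps endow U⁺ with the structure of a Hopf algebra over ℚ(q): Δ is coassociative, ε is a counit for Δ, and S satisfies the antipode axioms m∘(S⊗id)∘Δ = η∘ε = m∘(id⊗S)∘Δ. -/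

import Mathlib

noncomputable section

open scoped TensorProduct

/-- The ground field `ℚ(q)`, rational functions over `ℚ`. -/
abbrev K : Type := RatFunc ℚ

/-- The variable `q ∈ ℚ(q)`. -/
def q : K := RatFunc.X

/-- `b i j = -2` if `j = i` or `j = i+1`, and `b i j = 4 · sgn(j-i) · (-1)^(j-i)` otherwise. -/
def b (i j : ℤ) : ℤ :=
  if j = i ∨ j = i + 1 then -2 else 4 * (j - i).sign * (-1) ^ (j - i).natAbs

/-- The weight `β_i ∈ X = Hom_ℤ(𝔥, ℤ)`, modelled by its values on the basis. -/
def beta (i : ℤ) : ℤ → ℤ := fun j =>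
  if j = i then (-1) ^ i.natAbs * 2
  else if (-1) ^ j.natAbs * j > (-1) ^ j.natAbs * i then (-1) ^ i.natAbs * 4
  else 0

/-- The simple root `α_i ∈ X`, with `⟨α_i, e_j⟩ = δ_{j,i+1} - δ_{j,i}`. -/
def alphaX (i : ℤ) : ℤ → ℤ := fun j =>
  (if j = i + 1 then 1 else 0) - (if j = i then 1 else 0)

/-- The weight `γ_i = -β_{i+1} ∈ X`. -/
def gammaX (i : ℤ) : ℤ → ℤ := fun j => -beta (i + 1) j

/-- Generators of `U⁺`: the `E_i` (`i ∈ ℤ`) and the `K_λ` (`λ ∈ X`, where an element of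
`X = Hom_ℤ(𝔥, ℤ)` is modelled by the function `ℤ → ℤ` of its values on the basis `e_j`). -/
inductive UpGen where
  | E : ℤ → UpGen
  | K : (ℤ → ℤ) → UpGen

/-- `E_i` in the free algebra. -/
def Eι (i : ℤ) : FreeAlgebra K UpGen := FreeAlgebra.ι K (UpGen.E i)

/-- `K_λ` in the free algebra. -/
def Kι (lam : ℤ → ℤ) : FreeAlgebra K UpGen := FreeAlgebra.ι K (UpGen.K lam)

/-- The defining relations of `U⁺`:
`K_λK_μ = K_{λ+μ}`, `K_0 = 1`, `K_λE_i = q^{⟨λ,α_i^∨⟩}E_iK_λ`,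
`E_iE_j = q^{b_{ij}}E_jE_i` for `|i-j| > 1`, and the two Serre-type relations,
where `⟨λ, α_i^∨⟩ = λ(i+1) - λ(i)` and `[2] = q + q⁻¹`. -/
inductive UpRel : FreeAlgebra K UpGen → FreeAlgebra K UpGen → Prop
  | kk (lam mu : ℤ → ℤ) : UpRel (Kι lam * Kι mu) (Kι (lam + mu))
  | k0 : UpRel (Kι 0) 1
  | ke (lam : ℤ → ℤ) (i : ℤ) :
      UpRel (Kι lam * Eι i) ((q ^ (lam (i + 1) - lam i)) • (Eι i * Kι lam))
  | distant (i j : ℤ) (h : 1 < |i - j|) :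
      UpRel (Eι i * Eι j) ((q ^ b i j) • (Eι j * Eι i))
  | serre_up (i : ℤ) :
      UpRel ((q ^ (3 : ℤ)) • (Eι i * Eι i * Eι (i + 1)) -
          (q + q⁻¹) • (Eι i * Eι (i + 1) * Eι i) +
          (q ^ (-3 : ℤ)) • (Eι (i + 1) * Eι i * Eι i)) 0
  | serre_down (i : ℤ) :
      UpRel ((q ^ (-3 : ℤ)) • (Eι i * Eι i * Eι (i - 1)) -
          (q + q⁻¹) • (Eι i * Eι (i - 1) * Eι i) +
          (q ^ (3 : ℤ)) • (Eι (i - 1) * Eι i * Eι i)) 0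

/-- The positive Borel part `U⁺`. -/
abbrev Up : Type := RingQuot UpRel

/-- The generator `E_i ∈ U⁺`. -/
def EgP (i : ℤ) : Up := RingQuot.mkAlgHom K UpRel (Eι i)

/-- The generator `K_λ ∈ U⁺`. -/
def KgP (lam : ℤ → ℤ) : Up := RingQuot.mkAlgHom K UpRel (Kι lam)

set_option maxHeartbeats 4000000
set_option synthInstance.maxHeartbeats 1000000
-- ARITH START
lemma q_ne_zero : (q : K) ≠ 0 := RatFunc.X_ne_zero

lemma sign_eq (n : ℤ) : n.sign = if 0 < n then 1 else if n = 0 then 0 else -1 := by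
  rcases lt_trichotomy n 0 with h|h|h
  · rw [if_neg (by omega), if_neg (by omega), Int.sign_eq_neg_one_iff_neg.mpr h]
  · subst h; simp
  · rw [if_pos h, Int.sign_eq_one_iff_pos.mpr h]

lemma neg_one_pow_int (n : ℤ) : ((-1:ℤ))^n.natAbs = if n % 2 = 0 then 1 else -1 := by
  rcases Int.even_or_odd n with h | h
  · rw [if_pos (Int.even_iff.mp h)]; exact Even.neg_one_pow (Int.natAbs_even.mpr h)
  · rw [if_neg (by have := Int.odd_iff.mp h; omega)]
    exact Odd.neg_one_pow (Int.natAbs_odd.mpr h)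

lemma beta_diff (i j : ℤ) : beta (i+1) (j+1) - beta (i+1) j = b i j := by
  unfold beta b
  simp only [neg_one_pow_int, sign_eq]
  split_ifs <;> omega

/-- `⟨λ, α_i^∨⟩`. -/
def pr (l : ℤ → ℤ) (i : ℤ) : ℤ := l (i+1) - l i

lemma pr_add (l m : ℤ → ℤ) (i : ℤ) : pr (l + m) i = pr l i + pr m i := by
  simp [pr]; ring
lemma pr_neg (l : ℤ → ℤ) (i : ℤ) : pr (-l) i = -(pr l i) := by simp [pr]; ring
lemma pr_sub (l m : ℤ → ℤ) (i : ℤ) : pr (l - m) i = pr l i - pr m i := by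
  simp [pr]; ring

/-- the weight appearing in the right tensor factor of `Δ E_i`. -/
def cwt (i : ℤ) : ℤ → ℤ := alphaX i - gammaX i

lemma neg_cwt (i : ℤ) : gammaX i - alphaX i = -(cwt i) := by
  unfold cwt; ring

lemma pr_c (i j : ℤ) : pr (cwt i) j = pr (alphaX i) j + b i j := by
  have h := beta_diff i j
  simp only [pr, cwt, gammaX, Pi.sub_apply] at *
  omega

lemma pa_symm (i j : ℤ) : pr (alphaX i) j = pr (alphaX j) i := by
  simp only [pr, alphaX]
  split_ifs <;> omega

lemma pa_self (i : ℤ) : pr (alphaX i) i = 2 := by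
  simp only [pr, alphaX]; split_ifs <;> omega
lemma pa_succ (i : ℤ) : pr (alphaX i) (i+1) = -1 := by
  simp only [pr, alphaX]; split_ifs <;> omega
lemma pa_succ' (i : ℤ) : pr (alphaX (i+1)) i = -1 := by
  simp only [pr, alphaX]; split_ifs <;> omega
lemma pa_pred (i : ℤ) : pr (alphaX i) (i-1) = -1 := by
  simp only [pr, alphaX]; split_ifs <;> omega
lemma pa_pred' (i : ℤ) : pr (alphaX (i-1)) i = -1 := by
  simp only [pr, alphaX]; split_ifs <;> omega
lemma pa_dist {i j : ℤ} (h : 1 < |i - j|) : pr (alphaX i) j = 0 := by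
  rw [lt_abs] at h
  simp only [pr, alphaX]; split_ifs <;> omega

lemma b_self (i : ℤ) : b i i = -2 := by simp [b]
lemma b_succ (i : ℤ) : b i (i+1) = -2 := by simp [b]
lemma b_succ' (i : ℤ) : b (i-1) i = -2 := by
  unfold b; rw [if_pos (by omega)]
lemma b_pred (i : ℤ) : b i (i-1) = 4 := by
  unfold b; rw [if_neg (by omega)]
  have h : i - 1 - i = -1 := by ring
  rw [h]; decide
lemma b_pred' (i : ℤ) : b (i+1) i = 4 := by
  unfold b; rw [if_neg (by omega)]
  have h : i - (i+1) = -1 := by ring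
  rw [h]; decide
lemma b_antisymm {i j : ℤ} (h : 1 < |i - j|) : b j i = - b i j := by
  rw [lt_abs] at h
  unfold b
  rw [if_neg (by omega), if_neg (by omega)]
  have h1 : i - j = -(j - i) := by ring
  rw [h1, Int.sign_neg, Int.natAbs_neg]; ring
-- ARITH END
-- UP START
lemma K_mul_K (l m : ℤ → ℤ) : KgP l * KgP m = KgP (l + m) := by
  have h := RingQuot.mkAlgHom_rel K (UpRel.kk l m)
  rw [map_mul] at h; exact h

lemma K_zero : KgP 0 = 1 := by
  have h := RingQuot.mkAlgHom_rel K (UpRel.k0)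
  rw [map_one] at h; exact h

lemma K_mul_E (l : ℤ → ℤ) (i : ℤ) :
    KgP l * EgP i = q ^ (pr l i) • (EgP i * KgP l) := by
  have h := RingQuot.mkAlgHom_rel K (UpRel.ke l i)
  rw [map_mul, map_smul, map_mul] at h; exact h

lemma E_mul_K (l : ℤ → ℤ) (i : ℤ) :
    EgP i * KgP l = q ^ (-(pr l i)) • (KgP l * EgP i) := by
  rw [K_mul_E, smul_smul, ← zpow_add₀ q_ne_zero]
  rw [show -(pr l i) + pr l i = 0 by ring, zpow_zero, one_smul]

lemma E_dist {i j : ℤ} (h : 1 < |i - j|) :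
    EgP i * EgP j = q ^ (b i j) • (EgP j * EgP i) := by
  have h2 := RingQuot.mkAlgHom_rel K (UpRel.distant i j h)
  rw [map_mul, map_smul, map_mul] at h2; exact h2

/-- generic scalar-commutation in triple products -/
lemma swap3 {A : Type} [Semiring A] [Algebra K A] {x y : A} {s : K}
    (h : x * y = s • (y * x)) (z : A) : x * (y * z) = s • (y * (x * z)) := by
  rw [← mul_assoc, h, smul_mul_assoc, mul_assoc]

lemma flip_comm {A : Type} [Semiring A] [Algebra K A] {x y : A} {n : ℤ}
    (h : x * y = q ^ n • (y * x)) : y * x = q ^ (-n) • (x * y) := by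
  rw [h, smul_smul, ← zpow_add₀ q_ne_zero,
    show -n + n = 0 by ring, zpow_zero, one_smul]

/-- K-push rules (right-assoc forms) -/
lemma KK3 (l m : ℤ → ℤ) (z : Up) : KgP l * (KgP m * z) = KgP (l + m) * z := by
  rw [← mul_assoc, K_mul_K]
lemma KE3 (l : ℤ → ℤ) (i : ℤ) (z : Up) :
    KgP l * (EgP i * z) = q ^ (pr l i) • (EgP i * (KgP l * z)) :=
  swap3 (K_mul_E l i) z

lemma serreE_up (i : ℤ) :
    q ^ (3:ℤ) • (EgP i * (EgP i * EgP (i+1))) - (q + q⁻¹) • (EgP i * (EgP (i+1) * EgP i))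
      + q ^ (-3:ℤ) • (EgP (i+1) * (EgP i * EgP i)) = 0 := by
  have h := RingQuot.mkAlgHom_rel K (UpRel.serre_up i)
  rw [map_zero, map_add, map_sub, map_smul, map_smul, map_smul,
    map_mul, map_mul, map_mul, map_mul, map_mul, map_mul] at h
  rw [← mul_assoc, ← mul_assoc, ← mul_assoc]
  exact h

lemma serreE_down (i : ℤ) :
    q ^ (-3:ℤ) • (EgP i * (EgP i * EgP (i-1))) - (q + q⁻¹) • (EgP i * (EgP (i-1) * EgP i))
      + q ^ (3:ℤ) • (EgP (i-1) * (EgP i * EgP i)) = 0 := by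
  have h := RingQuot.mkAlgHom_rel K (UpRel.serre_down i)
  rw [map_zero, map_add, map_sub, map_smul, map_smul, map_smul,
    map_mul, map_mul, map_mul, map_mul, map_mul, map_mul] at h
  rw [← mul_assoc, ← mul_assoc, ← mul_assoc]
  exact h
-- UP END
-- Up-specialised copies of generic algebra lemmas (RingQuot's irreducible instances
-- prevent the generic forms from firing in `simp`).
lemma uneg_mul (x y : Up) : (-x) * y = -(x * y) := neg_mul x y
lemma umul_neg (x y : Up) : x * (-y) = -(x * y) := mul_neg x y
lemma uneg_neg (x : Up) : -(-x) = x := neg_neg x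
lemma usmul_neg (c : K) (x : Up) : c • (-x) = -(c • x) := smul_neg c x
lemma uneg_smul (c : K) (x : Up) : (-c) • x = -(c • x) := neg_smul c x
lemma umul_assoc (x y z : Up) : x * y * z = x * (y * z) := mul_assoc x y z
lemma usmul_mul (c : K) (x y : Up) : (c • x) * y = c • (x * y) := smul_mul_assoc c x y
lemma umul_smul (c : K) (x y : Up) : x * (c • y) = c • (x * y) := mul_smul_comm c x y
lemma usmul_smul (c d : K) (x : Up) : c • d • x = (c * d) • x := smul_smul c d x
lemma uadd_mul (x y z : Up) : (x + y) * z = x * z + y * z := add_mul x y z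
lemma usub_mul (x y z : Up) : (x - y) * z = x * z - y * z := sub_mul x y z
lemma uzero_mul (x : Up) : (0 : Up) * x = 0 := zero_mul x
lemma usmul_sub (c : K) (x y : Up) : c • (x - y) = c • x - c • y := smul_sub c x y
lemma usmul_add (c : K) (x y : Up) : c • (x + y) = c • x + c • y := smul_add c x y
lemma umul_add (x y z : Up) : x * (y + z) = x * y + x * z := mul_add x y z
lemma umul_zero (x : Up) : x * (0 : Up) = 0 := mul_zero x
lemma umul_one (x : Up) : x * 1 = x := mul_one x
lemma uone_mul (x : Up) : (1 : Up) * x = x := one_mul x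
lemma uadd_neg (x : Up) : x + -x = 0 := add_neg_cancel x
lemma uneg_add (x : Up) : -x + x = 0 := neg_add_cancel x
-- TENSOR START
lemma two_q : q + q⁻¹ = q^(1:ℤ) + q^(-1:ℤ) := by rw [zpow_one, zpow_neg_one]

lemma smulL (r : K) (x y : Up) : (r • x) ⊗ₜ[K] y = r • (x ⊗ₜ[K] y) :=
  LinearMap.map_smul₂ (TensorProduct.mk K Up Up) r x y
lemma smulR (r : K) (x y : Up) : x ⊗ₜ[K] (r • y) = r • (x ⊗ₜ[K] y) :=
  (TensorProduct.mk K Up Up x).map_smul r y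

lemma K_comm (l m : ℤ → ℤ) : KgP l * KgP m = KgP m * KgP l := by
  rw [K_mul_K, K_mul_K, add_comm]

/-- left summand of `Δ E_i` -/
def AT (i : ℤ) : Up ⊗[K] Up := KgP (alphaX i) ⊗ₜ[K] EgP i
/-- right summand of `Δ E_i` -/
def BT (i : ℤ) : Up ⊗[K] Up := EgP i ⊗ₜ[K] KgP (cwt i)

lemma AT_mul_BT (i j : ℤ) :
    AT i * BT j = q ^ (pr (alphaX i) j - pr (cwt j) i) • (BT j * AT i) := by
  unfold AT BT
  rw [Algebra.TensorProduct.tmul_mul_tmul, Algebra.TensorProduct.tmul_mul_tmul,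
    K_mul_E (alphaX i) j, E_mul_K (cwt j) i, smulL, smulR,
    smul_smul, ← zpow_add₀ q_ne_zero, sub_eq_add_neg]

lemma AT3 (i1 i2 i3 : ℤ) : AT i1 * (AT i2 * AT i3) =
    KgP (alphaX i1 + (alphaX i2 + alphaX i3)) ⊗ₜ[K] (EgP i1 * (EgP i2 * EgP i3)) := by
  unfold AT
  rw [Algebra.TensorProduct.tmul_mul_tmul, Algebra.TensorProduct.tmul_mul_tmul,
    K_mul_K, K_mul_K]

lemma BT3 (i1 i2 i3 : ℤ) : BT i1 * (BT i2 * BT i3) =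
    (EgP i1 * (EgP i2 * EgP i3)) ⊗ₜ[K] KgP (cwt i1 + (cwt i2 + cwt i3)) := by
  unfold BT
  rw [Algebra.TensorProduct.tmul_mul_tmul, Algebra.TensorProduct.tmul_mul_tmul,
    K_mul_K, K_mul_K]

lemma ATserre (i : ℤ) :
    q^(3:ℤ) • (AT i * (AT i * AT (i+1))) - (q + q⁻¹) • (AT i * (AT (i+1) * AT i))
      + q^(-3:ℤ) • (AT (i+1) * (AT i * AT i)) = 0 := by
  rw [AT3, AT3, AT3,
    show alphaX i + (alphaX (i+1) + alphaX i) = alphaX i + (alphaX i + alphaX (i+1)) by ring,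
    show alphaX (i+1) + (alphaX i + alphaX i) = alphaX i + (alphaX i + alphaX (i+1)) by ring,
    ← smulR, ← smulR, ← smulR,
    ← TensorProduct.tmul_sub, ← TensorProduct.tmul_add, serreE_up, TensorProduct.tmul_zero]

lemma BTserre (i : ℤ) :
    q^(3:ℤ) • (BT i * (BT i * BT (i+1))) - (q + q⁻¹) • (BT i * (BT (i+1) * BT i))
      + q^(-3:ℤ) • (BT (i+1) * (BT i * BT i)) = 0 := by
  rw [BT3, BT3, BT3,
    show cwt i + (cwt (i+1) + cwt i) = cwt i + (cwt i + cwt (i+1)) by ring,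
    show cwt (i+1) + (cwt i + cwt i) = cwt i + (cwt i + cwt (i+1)) by ring,
    ← smulL, ← smulL, ← smulL]
  rw [← TensorProduct.sub_tmul, ← TensorProduct.add_tmul]
  rw [show (q^(3:ℤ) • (EgP i * (EgP i * EgP (i+1))) - (q + q⁻¹) • (EgP i * (EgP (i+1) * EgP i)))
      + q^(-3:ℤ) • (EgP (i+1) * (EgP i * EgP i)) =
      q^(3:ℤ) • (EgP i * (EgP i * EgP (i+1))) - (q + q⁻¹) • (EgP i * (EgP (i+1) * EgP i))
      + q^(-3:ℤ) • (EgP (i+1) * (EgP i * EgP i)) from rfl, serreE_up,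
    TensorProduct.zero_tmul]

lemma ATserre_down (i : ℤ) :
    q^(-3:ℤ) • (AT i * (AT i * AT (i-1))) - (q + q⁻¹) • (AT i * (AT (i-1) * AT i))
      + q^(3:ℤ) • (AT (i-1) * (AT i * AT i)) = 0 := by
  rw [AT3, AT3, AT3,
    show alphaX i + (alphaX (i-1) + alphaX i) = alphaX i + (alphaX i + alphaX (i-1)) by ring,
    show alphaX (i-1) + (alphaX i + alphaX i) = alphaX i + (alphaX i + alphaX (i-1)) by ring,
    ← smulR, ← smulR, ← smulR,
    ← TensorProduct.tmul_sub, ← TensorProduct.tmul_add, serreE_down, TensorProduct.tmul_zero]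

lemma BTserre_down (i : ℤ) :
    q^(-3:ℤ) • (BT i * (BT i * BT (i-1))) - (q + q⁻¹) • (BT i * (BT (i-1) * BT i))
      + q^(3:ℤ) • (BT (i-1) * (BT i * BT i)) = 0 := by
  rw [BT3, BT3, BT3,
    show cwt i + (cwt (i-1) + cwt i) = cwt i + (cwt i + cwt (i-1)) by ring,
    show cwt (i-1) + (cwt i + cwt i) = cwt i + (cwt i + cwt (i-1)) by ring,
    ← smulL, ← smulL, ← smulL]
  rw [← TensorProduct.sub_tmul, ← TensorProduct.add_tmul]
  rw [show (q^(-3:ℤ) • (EgP i * (EgP i * EgP (i-1))) - (q + q⁻¹) • (EgP i * (EgP (i-1) * EgP i)))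
      + q^(3:ℤ) • (EgP (i-1) * (EgP i * EgP i)) =
      q^(-3:ℤ) • (EgP i * (EgP i * EgP (i-1))) - (q + q⁻¹) • (EgP i * (EgP (i-1) * EgP i))
      + q^(3:ℤ) • (EgP (i-1) * (EgP i * EgP i)) from rfl, serreE_down,
    TensorProduct.zero_tmul]
-- TENSOR END
-- DFREE START
/-- value of `Δ` on generators -/
def dGen : UpGen → Up ⊗[K] Up
  | .E i => AT i + BT i
  | .K l => KgP l ⊗ₜ[K] KgP l

/-- `Δ` on the free algebra -/
def Dfree : FreeAlgebra K UpGen →ₐ[K] Up ⊗[K] Up := FreeAlgebra.lift K dGen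

lemma Dfree_E (i : ℤ) : Dfree (Eι i) = AT i + BT i := by
  rw [Eι, Dfree, FreeAlgebra.lift_ι_apply]; rfl
lemma Dfree_K (l : ℤ → ℤ) : Dfree (Kι l) = KgP l ⊗ₜ[K] KgP l := by
  rw [Kι, Dfree, FreeAlgebra.lift_ι_apply]; rfl

set_option maxHeartbeats 2000000 in
theorem Drel : ∀ ⦃x y : FreeAlgebra K UpGen⦄, UpRel x y → Dfree x = Dfree y := by
  intro x y h
  cases h with
  | kk l m =>
      rw [map_mul, Dfree_K, Dfree_K, Dfree_K, Algebra.TensorProduct.tmul_mul_tmul, K_mul_K]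
  | k0 =>
      rw [map_one, Dfree_K, K_zero, Algebra.TensorProduct.one_def]
  | ke l i =>
      rw [map_mul, map_smul, map_mul, Dfree_K, Dfree_E]
      have h1 : (KgP l ⊗ₜ[K] KgP l) * AT i = q ^ (pr l i) • (AT i * (KgP l ⊗ₜ[K] KgP l)) := by
        unfold AT
        rw [Algebra.TensorProduct.tmul_mul_tmul, Algebra.TensorProduct.tmul_mul_tmul,
          K_mul_E l i, smulR, K_comm]
      have h2 : (KgP l ⊗ₜ[K] KgP l) * BT i = q ^ (pr l i) • (BT i * (KgP l ⊗ₜ[K] KgP l)) := by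
        unfold BT
        rw [Algebra.TensorProduct.tmul_mul_tmul, Algebra.TensorProduct.tmul_mul_tmul,
          K_mul_E l i, smulL, K_comm]
      rw [mul_add, add_mul, h1, h2, smul_add]
      rfl
  | distant i j hd =>
      rw [map_mul, map_smul, map_mul, Dfree_E, Dfree_E]
      have hAA : AT i * AT j = q ^ (b i j) • (AT j * AT i) := by
        unfold AT
        rw [Algebra.TensorProduct.tmul_mul_tmul, Algebra.TensorProduct.tmul_mul_tmul,
          E_dist hd, smulR, K_comm]
      have hBB : BT i * BT j = q ^ (b i j) • (BT j * BT i) := by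
        unfold BT
        rw [Algebra.TensorProduct.tmul_mul_tmul, Algebra.TensorProduct.tmul_mul_tmul,
          E_dist hd, smulL, K_comm]
      have hAB : AT i * BT j = q ^ (b i j) • (BT j * AT i) := by
        have h := AT_mul_BT i j
        rw [show pr (alphaX i) j - pr (cwt j) i = b i j by
          rw [pr_c, pa_symm j i, b_antisymm hd]; ring] at h
        exact h
      have hBA : BT i * AT j = q ^ (b i j) • (AT j * BT i) := by
        have h := flip_comm (AT_mul_BT j i)
        rw [show -(pr (alphaX j) i - pr (cwt i) j) = b i j by
          rw [pr_c, pa_symm j i]; ring] at h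
        exact h
      simp only [add_mul, mul_add, smul_add, hAA, hAB, hBA, hBB]
      abel
  | serre_up i =>
      simp only [map_add, map_sub, map_smul, map_mul, map_zero, Dfree_E]
      have h1 : BT i * AT i = q ^ (-2:ℤ) • (AT i * BT i) := by
        have h := flip_comm (AT_mul_BT i i)
        rw [show -(pr (alphaX i) i - pr (cwt i) i) = (-2:ℤ) by
          rw [pr_c, pa_self, b_self]; ring] at h
        exact h
      have h2 : BT i * AT (i+1) = q ^ (-2:ℤ) • (AT (i+1) * BT i) := by
        have h := flip_comm (AT_mul_BT (i+1) i)
        rw [show -(pr (alphaX (i+1)) i - pr (cwt i) (i+1)) = (-2:ℤ) by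
          rw [pr_c, pa_succ', pa_succ, b_succ]; ring] at h
        exact h
      have h3 : BT (i+1) * AT i = q ^ (4:ℤ) • (AT i * BT (i+1)) := by
        have h := flip_comm (AT_mul_BT i (i+1))
        rw [show -(pr (alphaX i) (i+1) - pr (cwt (i+1)) i) = (4:ℤ) by
          rw [pr_c, pa_succ, pa_succ', b_pred']; ring] at h
        exact h
      have h1' : ∀ z, BT i * (AT i * z) = q ^ (-2:ℤ) • (AT i * (BT i * z)) :=
        fun z => swap3 h1 z
      have h2' : ∀ z, BT i * (AT (i+1) * z) = q ^ (-2:ℤ) • (AT (i+1) * (BT i * z)) :=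
        fun z => swap3 h2 z
      have h3' : ∀ z, BT (i+1) * (AT i * z) = q ^ (4:ℤ) • (AT i * (BT (i+1) * z)) :=
        fun z => swap3 h3 z
      trans ((q ^ (3:ℤ) • (AT i * (AT i * AT (i+1))) - (q + q⁻¹) • (AT i * (AT (i+1) * AT i))
          + q ^ (-3:ℤ) • (AT (i+1) * (AT i * AT i)))
        + (q ^ (3:ℤ) • (BT i * (BT i * BT (i+1))) - (q + q⁻¹) • (BT i * (BT (i+1) * BT i))
          + q ^ (-3:ℤ) • (BT (i+1) * (BT i * BT i))))
      · simp only [mul_assoc, mul_add, add_mul, smul_add, h1, h2, h3, h1', h2', h3',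
          smul_mul_assoc, mul_smul_comm, smul_smul, two_q, add_smul,
          ← zpow_add₀ q_ne_zero]
        norm_num
        abel
      · rw [ATserre, BTserre, add_zero]
  | serre_down i =>
      simp only [map_add, map_sub, map_smul, map_mul, map_zero, Dfree_E]
      have h1 : BT i * AT i = q ^ (-2:ℤ) • (AT i * BT i) := by
        have h := flip_comm (AT_mul_BT i i)
        rw [show -(pr (alphaX i) i - pr (cwt i) i) = (-2:ℤ) by
          rw [pr_c, pa_self, b_self]; ring] at h
        exact h
      have h2 : BT i * AT (i-1) = q ^ (4:ℤ) • (AT (i-1) * BT i) := by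
        have h := flip_comm (AT_mul_BT (i-1) i)
        rw [show -(pr (alphaX (i-1)) i - pr (cwt i) (i-1)) = (4:ℤ) by
          rw [pr_c, pa_pred', pa_pred, b_pred]; ring] at h
        exact h
      have h3 : BT (i-1) * AT i = q ^ (-2:ℤ) • (AT i * BT (i-1)) := by
        have h := flip_comm (AT_mul_BT i (i-1))
        rw [show -(pr (alphaX i) (i-1) - pr (cwt (i-1)) i) = (-2:ℤ) by
          rw [pr_c, pa_pred, pa_pred', b_succ']; ring] at h
        exact h
      have h1' : ∀ z, BT i * (AT i * z) = q ^ (-2:ℤ) • (AT i * (BT i * z)) :=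
        fun z => swap3 h1 z
      have h2' : ∀ z, BT i * (AT (i-1) * z) = q ^ (4:ℤ) • (AT (i-1) * (BT i * z)) :=
        fun z => swap3 h2 z
      have h3' : ∀ z, BT (i-1) * (AT i * z) = q ^ (-2:ℤ) • (AT i * (BT (i-1) * z)) :=
        fun z => swap3 h3 z
      trans ((q ^ (-3:ℤ) • (AT i * (AT i * AT (i-1))) - (q + q⁻¹) • (AT i * (AT (i-1) * AT i))
          + q ^ (3:ℤ) • (AT (i-1) * (AT i * AT i)))
        + (q ^ (-3:ℤ) • (BT i * (BT i * BT (i-1))) - (q + q⁻¹) • (BT i * (BT (i-1) * BT i))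
          + q ^ (3:ℤ) • (BT (i-1) * (BT i * BT i))))
      · simp only [mul_assoc, mul_add, add_mul, smul_add, h1, h2, h3, h1', h2', h3',
          smul_mul_assoc, mul_smul_comm, smul_smul, two_q, add_smul,
          ← zpow_add₀ q_ne_zero]
        norm_num
        abel
      · rw [ATserre_down, BTserre_down, add_zero]
-- DFREE END
-- EPS START
/-- value of `ε` on generators -/
def eGen : UpGen → K
  | .E _ => 0
  | .K _ => 1

/-- `ε` on the free algebra -/
def Efree : FreeAlgebra K UpGen →ₐ[K] K := FreeAlgebra.lift K eGen

lemma Efree_E (i : ℤ) : Efree (Eι i) = 0 := by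
  rw [Eι, Efree, FreeAlgebra.lift_ι_apply]; rfl
lemma Efree_K (l : ℤ → ℤ) : Efree (Kι l) = 1 := by
  rw [Kι, Efree, FreeAlgebra.lift_ι_apply]; rfl

theorem Erel : ∀ ⦃x y : FreeAlgebra K UpGen⦄, UpRel x y → Efree x = Efree y := by
  intro x y h
  cases h with
  | kk l m => simp [Efree_K]
  | k0 => simp [Efree_K]
  | ke l i => simp [Efree_K, Efree_E]
  | distant i j hd => simp [Efree_E]
  | serre_up i => simp [Efree_E]
  | serre_down i => simp [Efree_E]
-- EPS END
-- S START
/-- value of the antipode on `E_i` -/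
def sE (i : ℤ) : Up := -(KgP (-(alphaX i)) * EgP i * KgP (gammaX i - alphaX i))

lemma sE_eq (i : ℤ) : sE i = -(KgP (-(alphaX i)) * (EgP i * KgP (-(cwt i)))) := by
  unfold sE; rw [neg_cwt, mul_assoc]

/-- value of the antipode on generators, in `Upᵐᵒᵖ` -/
def sGen : UpGen → Upᵐᵒᵖ
  | .E i => .op (sE i)
  | .K l => .op (KgP (-l))

/-- the antipode on the free algebra, into the opposite algebra -/
def Sfree : FreeAlgebra K UpGen →ₐ[K] Upᵐᵒᵖ := FreeAlgebra.lift K sGen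

lemma Sfree_E (i : ℤ) : Sfree (Eι i) = .op (sE i) := by
  rw [Eι, Sfree, FreeAlgebra.lift_ι_apply]; rfl
lemma Sfree_K (l : ℤ → ℤ) : Sfree (Kι l) = .op (KgP (-l)) := by
  rw [Kι, Sfree, FreeAlgebra.lift_ι_apply]; rfl

set_option maxHeartbeats 1000000 in
theorem Srel : ∀ ⦃x y : FreeAlgebra K UpGen⦄, UpRel x y → Sfree x = Sfree y := by
  intro x y h
  cases h with
  | kk l m =>
      rw [map_mul, Sfree_K, Sfree_K, Sfree_K, ← MulOpposite.op_mul, MulOpposite.op_inj,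
        K_mul_K, show -m + -l = -(l+m) from by ring]
  | k0 =>
      rw [map_one, Sfree_K, neg_zero, K_zero, MulOpposite.op_one]
  | ke l i =>
      rw [map_mul, map_smul, map_mul, Sfree_K, Sfree_E, ← MulOpposite.op_mul,
        ← MulOpposite.op_mul, ← MulOpposite.op_smul, MulOpposite.op_inj, sE_eq]
      simp only [umul_assoc, uneg_mul, umul_neg, uneg_neg, usmul_neg, KK3, K_mul_K, KE3, K_mul_E,
        usmul_mul, umul_smul, usmul_smul, ← zpow_add₀ q_ne_zero]
      rw [show (-alphaX i + -cwt i + -l : ℤ → ℤ) = -l + (-alphaX i + -cwt i) from by ring,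
        show (l (i+1) - l i + (pr (-alphaX i) i + pr (-l) i) : ℤ) = pr (-alphaX i) i from by
          simp only [pr, Pi.neg_apply]; ring]
  | distant i j hd =>
      rw [map_mul, map_smul, map_mul, Sfree_E, Sfree_E, ← MulOpposite.op_mul,
        ← MulOpposite.op_mul, ← MulOpposite.op_smul, MulOpposite.op_inj, sE_eq, sE_eq]
      simp only [umul_assoc, uneg_mul, umul_neg, uneg_neg, usmul_neg, KK3, K_mul_K, KE3, K_mul_E,
        usmul_mul, umul_smul, usmul_smul, ← zpow_add₀ q_ne_zero]
      have hd2 : 1 < |j - i| := by rwa [abs_sub_comm]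
      rw [swap3 (E_dist hd2) (KgP (-alphaX j + -cwt j + (-alphaX i + -cwt i))),
        usmul_smul, ← zpow_add₀ q_ne_zero,
        show (-alphaX j + -cwt j + (-alphaX i + -cwt i) : ℤ → ℤ)
          = -alphaX i + -cwt i + (-alphaX j + -cwt j) from by ring,
        show (pr (-alphaX i) i + (pr (-alphaX j) j + pr (-alphaX j + -cwt j) i) + b j i : ℤ)
          = b i j + (pr (-alphaX j) j + (pr (-alphaX i) i + pr (-alphaX i + -cwt i) j)) from by
          simp only [pr_add, pr_neg, pr_c]; rw [pa_symm j i]; ring]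
  | serre_up i =>
      simp only [map_add, map_sub, map_smul, map_mul, map_zero, Sfree_E]
      simp only [← MulOpposite.op_mul, ← MulOpposite.op_smul, ← MulOpposite.op_add,
        ← MulOpposite.op_sub]
      rw [show (0 : Upᵐᵒᵖ) = MulOpposite.op (0 : Up) from rfl, MulOpposite.op_inj]
      simp only [sE_eq]
      simp only [umul_assoc, uneg_mul, umul_neg, uneg_neg, usmul_neg, KK3, K_mul_K, KE3, K_mul_E,
        usmul_mul, umul_smul, usmul_smul, ← zpow_add₀ q_ne_zero]
      rw [show (3 + (pr (-alphaX i) i + (pr (-alphaX i) i + pr (-alphaX i + -cwt i) i) +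
            (pr (-alphaX (i + 1)) (i + 1) +
              (pr (-alphaX (i + 1) + -cwt (i + 1)) i + pr (-alphaX (i + 1) + -cwt (i + 1)) i))) : ℤ)
          = (-9 : ℤ) from by
          simp only [pr_add, pr_neg, pr_c, pa_self, pa_succ, pa_succ', b_self, b_succ, b_pred']
          norm_num,
        show (pr (-alphaX i) i + (pr (-alphaX (i + 1)) (i + 1) + pr (-alphaX (i + 1) + -cwt (i + 1)) i) +
            (pr (-alphaX i) i + (pr (-alphaX i + -cwt i) (i + 1) + pr (-alphaX i + -cwt i) i)) : ℤ)
          = (-6 : ℤ) from by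
          simp only [pr_add, pr_neg, pr_c, pa_self, pa_succ, pa_succ', b_self, b_succ, b_pred']
          norm_num,
        show (-3 + (pr (-alphaX (i + 1)) (i + 1) + (pr (-alphaX i) i + pr (-alphaX i + -cwt i) (i + 1)) +
            (pr (-alphaX i) i + (pr (-alphaX i + -cwt i) i + pr (-alphaX i + -cwt i) (i + 1)))) : ℤ)
          = (-3 : ℤ) from by
          simp only [pr_add, pr_neg, pr_c, pa_self, pa_succ, pa_succ', b_self, b_succ, b_pred']
          norm_num,
        show (-alphaX (i + 1) + -cwt (i + 1) + (-alphaX i + -cwt i + (-alphaX i + -cwt i)) : ℤ → ℤ)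
          = -alphaX i + -cwt i + (-alphaX i + -cwt i + (-alphaX (i + 1) + -cwt (i + 1))) from by ring,
        show (-alphaX i + -cwt i + (-alphaX (i + 1) + -cwt (i + 1) + (-alphaX i + -cwt i)) : ℤ → ℤ)
          = -alphaX i + -cwt i + (-alphaX i + -cwt i + (-alphaX (i + 1) + -cwt (i + 1))) from by ring]
      set w : ℤ → ℤ := -alphaX i + -cwt i + (-alphaX i + -cwt i + (-alphaX (i + 1) + -cwt (i + 1))) with hw
      have h2 := congrArg (fun t : Up => t * KgP w) (serreE_up i)
      simp only [uadd_mul, usub_mul, usmul_mul, umul_assoc, uzero_mul] at h2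
      have h3 := congrArg (fun t : Up => q ^ (-6 : ℤ) • t) h2
      simp only [usmul_sub, usmul_add, usmul_smul, smul_zero] at h3
      rw [show (q ^ (-6:ℤ) * q ^ (3:ℤ) : K) = q ^ (-3:ℤ) from by
            rw [← zpow_add₀ q_ne_zero]; norm_num,
          show (q ^ (-6:ℤ) * q ^ (-3:ℤ) : K) = q ^ (-9:ℤ) from by
            rw [← zpow_add₀ q_ne_zero]; norm_num,
          mul_comm (q ^ (-6:ℤ)) (q + q⁻¹)] at h3
      trans (-(q ^ (-3:ℤ) • (EgP i * (EgP i * (EgP (i + 1) * KgP w)))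
        - ((q + q⁻¹) * q ^ (-6:ℤ)) • (EgP i * (EgP (i + 1) * (EgP i * KgP w)))
        + q ^ (-9:ℤ) • (EgP (i + 1) * (EgP i * (EgP i * KgP w)))))
      · abel
      · rw [h3, neg_zero]
  | serre_down i =>
      simp only [map_add, map_sub, map_smul, map_mul, map_zero, Sfree_E]
      simp only [← MulOpposite.op_mul, ← MulOpposite.op_smul, ← MulOpposite.op_add,
        ← MulOpposite.op_sub]
      rw [show (0 : Upᵐᵒᵖ) = MulOpposite.op (0 : Up) from rfl, MulOpposite.op_inj]
      simp only [sE_eq]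
      simp only [umul_assoc, uneg_mul, umul_neg, uneg_neg, usmul_neg, KK3, K_mul_K, KE3, K_mul_E,
        usmul_mul, umul_smul, usmul_smul, ← zpow_add₀ q_ne_zero]
      rw [show (-3 + (pr (-alphaX i) i + (pr (-alphaX i) i + pr (-alphaX i + -cwt i) i) +
            (pr (-alphaX (i - 1)) (i - 1) +
              (pr (-alphaX (i - 1) + -cwt (i - 1)) i + pr (-alphaX (i - 1) + -cwt (i - 1)) i))) : ℤ)
          = (-3 : ℤ) from by
          simp only [pr_add, pr_neg, pr_c, pa_self, pa_pred, pa_pred', b_self, b_pred, b_succ']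
          norm_num,
        show (pr (-alphaX i) i + (pr (-alphaX (i - 1)) (i - 1) + pr (-alphaX (i - 1) + -cwt (i - 1)) i) +
            (pr (-alphaX i) i + (pr (-alphaX i + -cwt i) (i - 1) + pr (-alphaX i + -cwt i) i)) : ℤ)
          = (-6 : ℤ) from by
          simp only [pr_add, pr_neg, pr_c, pa_self, pa_pred, pa_pred', b_self, b_pred, b_succ']
          norm_num,
        show (3 + (pr (-alphaX (i - 1)) (i - 1) + (pr (-alphaX i) i + pr (-alphaX i + -cwt i) (i - 1)) +
            (pr (-alphaX i) i + (pr (-alphaX i + -cwt i) i + pr (-alphaX i + -cwt i) (i - 1)))) : ℤ)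
          = (-9 : ℤ) from by
          simp only [pr_add, pr_neg, pr_c, pa_self, pa_pred, pa_pred', b_self, b_pred, b_succ']
          norm_num,
        show (-alphaX (i - 1) + -cwt (i - 1) + (-alphaX i + -cwt i + (-alphaX i + -cwt i)) : ℤ → ℤ)
          = -alphaX i + -cwt i + (-alphaX i + -cwt i + (-alphaX (i - 1) + -cwt (i - 1))) from by ring,
        show (-alphaX i + -cwt i + (-alphaX (i - 1) + -cwt (i - 1) + (-alphaX i + -cwt i)) : ℤ → ℤ)
          = -alphaX i + -cwt i + (-alphaX i + -cwt i + (-alphaX (i - 1) + -cwt (i - 1))) from by ring]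
      set w : ℤ → ℤ := -alphaX i + -cwt i + (-alphaX i + -cwt i + (-alphaX (i - 1) + -cwt (i - 1))) with hw
      have h2 := congrArg (fun t : Up => t * KgP w) (serreE_down i)
      simp only [uadd_mul, usub_mul, usmul_mul, umul_assoc, uzero_mul] at h2
      have h3 := congrArg (fun t : Up => q ^ (-6 : ℤ) • t) h2
      simp only [usmul_sub, usmul_add, usmul_smul, smul_zero] at h3
      rw [show (q ^ (-6:ℤ) * q ^ (-3:ℤ) : K) = q ^ (-9:ℤ) from by
            rw [← zpow_add₀ q_ne_zero]; norm_num,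
          show (q ^ (-6:ℤ) * q ^ (3:ℤ) : K) = q ^ (-3:ℤ) from by
            rw [← zpow_add₀ q_ne_zero]; norm_num,
          mul_comm (q ^ (-6:ℤ)) (q + q⁻¹)] at h3
      trans (-(q ^ (-9:ℤ) • (EgP i * (EgP i * (EgP (i - 1) * KgP w)))
        - ((q + q⁻¹) * q ^ (-6:ℤ)) • (EgP i * (EgP (i - 1) * (EgP i * KgP w)))
        + q ^ (-3:ℤ) • (EgP (i - 1) * (EgP i * (EgP i * KgP w)))))
      · abel
      · rw [h3, neg_zero]
-- S END
-- HOPF1 START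
/-- the comultiplication -/
def Dh : Up →ₐ[K] Up ⊗[K] Up := RingQuot.liftAlgHom K ⟨Dfree, Drel⟩
/-- the counit -/
def Eh : Up →ₐ[K] K := RingQuot.liftAlgHom K ⟨Efree, Erel⟩
/-- the antipode, as an algebra hom to the opposite algebra -/
def Sa : Up →ₐ[K] Upᵐᵒᵖ := RingQuot.liftAlgHom K ⟨Sfree, Srel⟩
/-- the antipode -/
def Sh : Up →ₗ[K] Up :=
  (MulOpposite.opLinearEquiv K : Up ≃ₗ[K] Upᵐᵒᵖ).symm.toLinearMap.comp Sa.toLinearMap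

lemma Dh_E (i : ℤ) : Dh (EgP i) = AT i + BT i := by
  rw [Dh, EgP, RingQuot.liftAlgHom_mkAlgHom_apply]; exact Dfree_E i
lemma Dh_K (l : ℤ → ℤ) : Dh (KgP l) = KgP l ⊗ₜ[K] KgP l := by
  rw [Dh, KgP, RingQuot.liftAlgHom_mkAlgHom_apply]; exact Dfree_K l
lemma Eh_E (i : ℤ) : Eh (EgP i) = 0 := by
  rw [Eh, EgP, RingQuot.liftAlgHom_mkAlgHom_apply]; exact Efree_E i
lemma Eh_K (l : ℤ → ℤ) : Eh (KgP l) = 1 := by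
  rw [Eh, KgP, RingQuot.liftAlgHom_mkAlgHom_apply]; exact Efree_K l
lemma Sh_E (i : ℤ) : Sh (EgP i) = sE i := by
  rw [Sh]
  show (MulOpposite.opLinearEquiv K (M := Up)).symm (Sa (EgP i)) = sE i
  rw [Sa, EgP, RingQuot.liftAlgHom_mkAlgHom_apply, Sfree_E]
  rfl
lemma Sh_K (l : ℤ → ℤ) : Sh (KgP l) = KgP (-l) := by
  rw [Sh]
  show (MulOpposite.opLinearEquiv K (M := Up)).symm (Sa (KgP l)) = KgP (-l)
  rw [Sa, KgP, RingQuot.liftAlgHom_mkAlgHom_apply, Sfree_K]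
  rfl
lemma Sh_mul (x y : Up) : Sh (x * y) = Sh y * Sh x := by
  rw [Sh]
  show (MulOpposite.opLinearEquiv K (M := Up)).symm (Sa (x * y)) = _
  rw [map_mul]
  rfl
lemma Sh_one : Sh 1 = 1 := by
  rw [Sh]
  show (MulOpposite.opLinearEquiv K (M := Up)).symm (Sa 1) = 1
  rw [map_one]
  rfl
lemma Sh_algebraMap (r : K) : Sh (algebraMap K Up r) = algebraMap K Up r := by
  rw [Sh]
  show (MulOpposite.opLinearEquiv K (M := Up)).symm (Sa (algebraMap K Up r)) = _
  rw [AlgHom.commutes]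
  rfl

/-- induction on generators for `Up` -/
lemma Up.induction {P : Up → Prop} (h_alg : ∀ r : K, P (algebraMap K Up r))
    (h_E : ∀ i, P (EgP i)) (h_K : ∀ l, P (KgP l))
    (h_mul : ∀ x y, P x → P y → P (x * y))
    (h_add : ∀ x y, P x → P y → P (x + y)) : ∀ x, P x := by
  intro x
  obtain ⟨y, rfl⟩ := RingQuot.mkAlgHom_surjective K UpRel x
  induction y using FreeAlgebra.induction with
  | grade0 r => rw [AlgHom.commutes]; exact h_alg r
  | grade1 g => cases g with
    | E i => exact h_E i
    | K l => exact h_K l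
  | mul a b ha hb => rw [map_mul]; exact h_mul _ _ ha hb
  | add a b ha hb => rw [map_add]; exact h_add _ _ ha hb

/-- two algebra homs out of `Up` agreeing on generators agree -/
lemma Up.hom_ext {A : Type} [Semiring A] [Algebra K A] {f g : Up →ₐ[K] A}
    (hE : ∀ i, f (EgP i) = g (EgP i)) (hK : ∀ l, f (KgP l) = g (KgP l)) : f = g := by
  have h : f.comp (RingQuot.mkAlgHom K UpRel) = g.comp (RingQuot.mkAlgHom K UpRel) := by
    apply FreeAlgebra.hom_ext
    funext gen
    cases gen with
    | E i => exact hE i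
    | K l => exact hK l
  apply AlgHom.ext
  intro x
  obtain ⟨y, rfl⟩ := RingQuot.mkAlgHom_surjective K UpRel x
  exact DFunLike.congr_fun h y
-- HOPF1 END
-- HOPF2 START
lemma coassoc (x : Up) :
    (Algebra.TensorProduct.assoc K K K Up Up Up)
        ((Algebra.TensorProduct.map Dh (AlgHom.id K Up)) (Dh x)) =
      (Algebra.TensorProduct.map (AlgHom.id K Up) Dh) (Dh x) := by
  have h : ((Algebra.TensorProduct.assoc K K K Up Up Up).toAlgHom.comp
      ((Algebra.TensorProduct.map Dh (AlgHom.id K Up)).comp Dh)) =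
      (Algebra.TensorProduct.map (AlgHom.id K Up) Dh).comp Dh := by
    apply Up.hom_ext
    · intro i
      simp only [AlgHom.comp_apply, AlgEquiv.toAlgHom_eq_coe, AlgHom.coe_coe, Dh_E, AT, BT,
        map_add, Algebra.TensorProduct.map_tmul, AlgHom.coe_id, id_eq, Dh_K,
        Algebra.TensorProduct.assoc_tmul, TensorProduct.tmul_add, TensorProduct.add_tmul]
      abel
    · intro l
      simp only [AlgHom.comp_apply, AlgEquiv.toAlgHom_eq_coe, AlgHom.coe_coe, Dh_K,
        map_add, Algebra.TensorProduct.map_tmul, AlgHom.coe_id, id_eq,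
        Algebra.TensorProduct.assoc_tmul, AlgEquiv.coe_algHom]
  have := DFunLike.congr_fun h x
  simpa only [AlgHom.comp_apply, AlgEquiv.toAlgHom_eq_coe, AlgHom.coe_coe, AlgEquiv.coe_algHom] using this

lemma counitL (x : Up) :
    (TensorProduct.lid K Up)
        ((TensorProduct.map Eh.toLinearMap (LinearMap.id : Up →ₗ[K] Up)) (Dh x)) = x := by
  have hmap : (TensorProduct.map Eh.toLinearMap (LinearMap.id : Up →ₗ[K] Up))
      = (Algebra.TensorProduct.map Eh (AlgHom.id K Up)).toLinearMap := by
    apply TensorProduct.ext'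
    intro a b
    rfl
  have h : ((Algebra.TensorProduct.lid K Up).toAlgHom.comp
      ((Algebra.TensorProduct.map Eh (AlgHom.id K Up)).comp Dh)) = AlgHom.id K Up := by
    apply Up.hom_ext
    · intro i
      simp only [AlgHom.comp_apply, AlgEquiv.toAlgHom_eq_coe, AlgHom.coe_coe, Dh_E, AT, BT,
        map_add, Algebra.TensorProduct.map_tmul, AlgHom.coe_id, id_eq, Eh_E, Eh_K,
        Algebra.TensorProduct.lid_tmul, TensorProduct.zero_tmul, map_zero, one_smul, add_zero,
        AlgEquiv.coe_algHom]
    · intro l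
      simp only [AlgHom.comp_apply, AlgEquiv.toAlgHom_eq_coe, AlgHom.coe_coe, Dh_K,
        Algebra.TensorProduct.map_tmul, AlgHom.coe_id, id_eq, Eh_K,
        Algebra.TensorProduct.lid_tmul, one_smul, AlgEquiv.coe_algHom]
  have h2 := DFunLike.congr_fun h x
  simp only [AlgHom.comp_apply, AlgEquiv.toAlgHom_eq_coe, AlgHom.coe_coe, AlgHom.coe_id,
    id_eq] at h2
  rw [hmap]
  exact h2

lemma counitR (x : Up) :
    (TensorProduct.rid K Up)
        ((TensorProduct.map (LinearMap.id : Up →ₗ[K] Up) Eh.toLinearMap) (Dh x)) = x := by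
  have hmap : (TensorProduct.map (LinearMap.id : Up →ₗ[K] Up) Eh.toLinearMap)
      = (Algebra.TensorProduct.map (AlgHom.id K Up) Eh).toLinearMap := by
    apply TensorProduct.ext'
    intro a b
    rfl
  have hrid : ∀ z : Up ⊗[K] K, TensorProduct.rid K Up z = Algebra.TensorProduct.rid K K Up z := by
    have h3 : (TensorProduct.rid K Up).toLinearMap
        = (Algebra.TensorProduct.rid K K Up).toLinearEquiv.toLinearMap :=
      TensorProduct.ext' (fun a b => by
        simp [TensorProduct.rid_tmul, Algebra.TensorProduct.rid_tmul])
    intro z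
    have := DFunLike.congr_fun h3 z
    exact this
  have h : ((Algebra.TensorProduct.rid K K Up).toAlgHom.comp
      ((Algebra.TensorProduct.map (AlgHom.id K Up) Eh).comp Dh)) = AlgHom.id K Up := by
    apply Up.hom_ext
    · intro i
      simp only [AlgHom.comp_apply, AlgEquiv.toAlgHom_eq_coe, AlgHom.coe_coe, Dh_E, AT, BT,
        map_add, Algebra.TensorProduct.map_tmul, AlgHom.coe_id, id_eq, Eh_E, Eh_K,
        Algebra.TensorProduct.rid_tmul, TensorProduct.tmul_zero, map_zero, one_smul, zero_add,
        AlgEquiv.coe_algHom]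
    · intro l
      simp only [AlgHom.comp_apply, AlgEquiv.toAlgHom_eq_coe, AlgHom.coe_coe, Dh_K,
        Algebra.TensorProduct.map_tmul, AlgHom.coe_id, id_eq, Eh_K,
        Algebra.TensorProduct.rid_tmul, one_smul, AlgEquiv.coe_algHom]
  have h2 := DFunLike.congr_fun h x
  simp only [AlgHom.comp_apply, AlgEquiv.toAlgHom_eq_coe, AlgHom.coe_coe, AlgHom.coe_id,
    id_eq] at h2
  rw [hmap, hrid]
  exact h2
-- HOPF2 END
-- HOPF3 START
lemma antiL (x : Up) :
    (LinearMap.mul' K Up)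
        ((TensorProduct.map Sh (LinearMap.id : Up →ₗ[K] Up)) (Dh x)) =
      algebraMap K Up (Eh x) := by
  have key : ∀ (y y' : Up) (a : Up ⊗[K] Up),
      (LinearMap.mul' K Up) ((TensorProduct.map Sh LinearMap.id) (a * (y ⊗ₜ[K] y'))) =
        Sh y * ((LinearMap.mul' K Up) ((TensorProduct.map Sh LinearMap.id) a)) * y' := by
    intro y y' a
    induction a using TensorProduct.induction_on with
    | zero => simp only [zero_mul, mul_zero, map_zero, smul_zero, umul_zero, uzero_mul]
    | tmul u u' =>
        rw [Algebra.TensorProduct.tmul_mul_tmul, TensorProduct.map_tmul,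
          TensorProduct.map_tmul, LinearMap.mul'_apply, LinearMap.mul'_apply,
          LinearMap.id_coe, id_eq, id_eq, Sh_mul]
        rw [umul_assoc, umul_assoc, umul_assoc]
    | add u v hu hv =>
        rw [add_mul, map_add, map_add, hu, hv]; simp only [map_add, umul_add, uadd_mul]
  have step : ∀ (x : Up) (bb : Up ⊗[K] Up),
      (LinearMap.mul' K Up) ((TensorProduct.map Sh LinearMap.id) (Dh x)) = algebraMap K Up (Eh x) →
      (LinearMap.mul' K Up) ((TensorProduct.map Sh LinearMap.id) (Dh x * bb)) =
        Eh x • ((LinearMap.mul' K Up) ((TensorProduct.map Sh LinearMap.id) bb)) := by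
    intro x bb hx
    induction bb using TensorProduct.induction_on with
    | zero => simp only [zero_mul, mul_zero, map_zero, smul_zero, umul_zero, uzero_mul]
    | tmul y y' =>
        rw [key y y' (Dh x), hx, TensorProduct.map_tmul, LinearMap.mul'_apply,
          LinearMap.id_coe, id_eq,
          show Sh y * algebraMap K Up (Eh x) = Eh x • Sh y from by
            rw [← Algebra.commutes (Eh x) (Sh y), ← Algebra.smul_def],
          usmul_mul]
    | add u v hu hv => rw [mul_add, map_add, map_add, hu, hv]; simp only [map_add, smul_add]
  induction x using Up.induction with
  | h_alg r =>
      rw [AlgHom.commutes, AlgHom.commutes, Algebra.TensorProduct.algebraMap_apply,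
        TensorProduct.map_tmul, LinearMap.mul'_apply, Sh_algebraMap, LinearMap.id_coe, id_eq,
        umul_one, Algebra.algebraMap_self_apply]
  | h_E i =>
      rw [Dh_E, AT, BT, map_add, TensorProduct.map_tmul, TensorProduct.map_tmul, map_add,
        LinearMap.mul'_apply, LinearMap.mul'_apply, LinearMap.id_coe, id_eq, id_eq,
        Sh_K, Sh_E, Eh_E, map_zero, sE_eq, uneg_mul, umul_assoc, umul_assoc, K_mul_K,
        show (-(cwt i) + cwt i : ℤ → ℤ) = 0 from by ring, K_zero, umul_one, uadd_neg]
  | h_K l =>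
      rw [Dh_K, TensorProduct.map_tmul, LinearMap.mul'_apply, Sh_K, LinearMap.id_coe, id_eq,
        K_mul_K, show (-l + l : ℤ → ℤ) = 0 from by ring, K_zero, Eh_K, map_one]
  | h_mul x y hx hy =>
      rw [map_mul, step x (Dh y) hx, hy, map_mul, Algebra.smul_def, map_mul]
  | h_add x y hx hy =>
      rw [map_add, map_add, map_add, hx, hy, map_add, map_add]

lemma antiR (x : Up) :
    (LinearMap.mul' K Up)
        ((TensorProduct.map (LinearMap.id : Up →ₗ[K] Up) Sh) (Dh x)) =
      algebraMap K Up (Eh x) := by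
  have key : ∀ (y y' : Up) (a : Up ⊗[K] Up),
      (LinearMap.mul' K Up) ((TensorProduct.map LinearMap.id Sh) ((y ⊗ₜ[K] y') * a)) =
        y * ((LinearMap.mul' K Up) ((TensorProduct.map LinearMap.id Sh) a)) * Sh y' := by
    intro y y' a
    induction a using TensorProduct.induction_on with
    | zero => simp only [zero_mul, mul_zero, map_zero, smul_zero, umul_zero, uzero_mul]
    | tmul u u' =>
        rw [Algebra.TensorProduct.tmul_mul_tmul, TensorProduct.map_tmul,
          TensorProduct.map_tmul, LinearMap.mul'_apply, LinearMap.mul'_apply,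
          LinearMap.id_coe, id_eq, id_eq, Sh_mul]
        rw [umul_assoc, umul_assoc, umul_assoc]
    | add u v hu hv =>
        rw [mul_add, map_add, map_add, hu, hv]; simp only [map_add, umul_add, uadd_mul]
  have step : ∀ (y : Up) (aa : Up ⊗[K] Up),
      (LinearMap.mul' K Up) ((TensorProduct.map LinearMap.id Sh) (Dh y)) = algebraMap K Up (Eh y) →
      (LinearMap.mul' K Up) ((TensorProduct.map LinearMap.id Sh) (aa * Dh y)) =
        Eh y • ((LinearMap.mul' K Up) ((TensorProduct.map LinearMap.id Sh) aa)) := by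
    intro y aa hy
    induction aa using TensorProduct.induction_on with
    | zero => simp only [zero_mul, mul_zero, map_zero, smul_zero, umul_zero, uzero_mul]
    | tmul u u' =>
        rw [key u u' (Dh y), hy, TensorProduct.map_tmul, LinearMap.mul'_apply,
          LinearMap.id_coe, id_eq,
          show u * algebraMap K Up (Eh y) = Eh y • u from by
            rw [← Algebra.commutes (Eh y) u, ← Algebra.smul_def],
          usmul_mul]
    | add u v hu hv => rw [add_mul, map_add, map_add, hu, hv]; simp only [map_add, smul_add]
  induction x using Up.induction with
  | h_alg r =>
      rw [AlgHom.commutes, AlgHom.commutes, Algebra.TensorProduct.algebraMap_apply,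
        TensorProduct.map_tmul, LinearMap.mul'_apply, Sh_one, LinearMap.id_coe, id_eq,
        umul_one, Algebra.algebraMap_self_apply]
  | h_E i =>
      rw [Dh_E, AT, BT, map_add, TensorProduct.map_tmul, TensorProduct.map_tmul, map_add,
        LinearMap.mul'_apply, LinearMap.mul'_apply, LinearMap.id_coe, id_eq, id_eq,
        Sh_K, Sh_E, Eh_E, map_zero, sE_eq, umul_neg, KK3,
        show (alphaX i + -(alphaX i) : ℤ → ℤ) = 0 from by ring, K_zero, uone_mul, uneg_add]
  | h_K l =>
      rw [Dh_K, TensorProduct.map_tmul, LinearMap.mul'_apply, Sh_K, LinearMap.id_coe, id_eq,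
        K_mul_K, show (l + -l : ℤ → ℤ) = 0 from by ring, K_zero, Eh_K, map_one]
  | h_mul x y hx hy =>
      rw [map_mul, step y (Dh x) hy, hx, map_mul, Algebra.smul_def]
      rw [← map_mul, mul_comm (Eh y) (Eh x)]
  | h_add x y hx hy =>
      rw [map_add, map_add, map_add, hx, hy, map_add, map_add]
-- HOPF3 END
/-- There exist a `ℚ(q)`-algebra homomorphism `Δ : U⁺ → U⁺ ⊗ U⁺` with
`Δ E_i = K_{α_i} ⊗ E_i + E_i ⊗ K_{α_i - γ_i}`, `Δ K_λ = K_λ ⊗ K_λ`, a `ℚ(q)`-algebra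
homomorphism `ε : U⁺ → ℚ(q)` with `ε E_i = 0`, `ε K_λ = 1`, and a `ℚ(q)`-linear algebra
anti-endomorphism `S` of `U⁺` with `S E_i = -K_{-α_i}E_iK_{γ_i-α_i}`, `S K_λ = K_{-λ}`,
which make `U⁺` a Hopf algebra: `Δ` is coassociative, `ε` is a counit for `Δ`, and `S`
satisfies the antipode axioms `m ∘ (S ⊗ id) ∘ Δ = η ∘ ε = m ∘ (id ⊗ S) ∘ Δ`. -/
theorem Up_hopfAlgebra :
    ∃ (Δ : Up →ₐ[K] Up ⊗[K] Up) (counit : Up →ₐ[K] K) (S : Up →ₗ[K] Up),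
      (∀ i : ℤ,
        Δ (EgP i) = KgP (alphaX i) ⊗ₜ[K] EgP i + EgP i ⊗ₜ[K] KgP (alphaX i - gammaX i)) ∧
      (∀ lam : ℤ → ℤ, Δ (KgP lam) = KgP lam ⊗ₜ[K] KgP lam) ∧
      (∀ i : ℤ, counit (EgP i) = 0) ∧
      (∀ lam : ℤ → ℤ, counit (KgP lam) = 1) ∧
      (∀ i : ℤ, S (EgP i) = -(KgP (-(alphaX i)) * EgP i * KgP (gammaX i - alphaX i))) ∧
      (∀ lam : ℤ → ℤ, S (KgP lam) = KgP (-lam)) ∧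
      (∀ x y : Up, S (x * y) = S y * S x) ∧ S 1 = 1 ∧
      -- coassociativity
      (∀ x : Up,
        (Algebra.TensorProduct.assoc K K K Up Up Up)
            ((Algebra.TensorProduct.map Δ (AlgHom.id K Up)) (Δ x)) =
          (Algebra.TensorProduct.map (AlgHom.id K Up) Δ) (Δ x)) ∧
      -- counit axioms
      (∀ x : Up,
        (TensorProduct.lid K Up)
            ((TensorProduct.map counit.toLinearMap (LinearMap.id : Up →ₗ[K] Up)) (Δ x)) = x) ∧
      (∀ x : Up,
        (TensorProduct.rid K Up)
            ((TensorProduct.map (LinearMap.id : Up →ₗ[K] Up) counit.toLinearMap) (Δ x)) = x) ∧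
      -- antipode axioms
      (∀ x : Up,
        (LinearMap.mul' K Up)
            ((TensorProduct.map S (LinearMap.id : Up →ₗ[K] Up)) (Δ x)) =
          algebraMap K Up (counit x)) ∧
      (∀ x : Up,
        (LinearMap.mul' K Up)
            ((TensorProduct.map (LinearMap.id : Up →ₗ[K] Up) S) (Δ x)) =
          algebraMap K Up (counit x)) := by
  refine ⟨Dh, Eh, Sh, ?_, Dh_K, Eh_E, Eh_K, ?_, Sh_K, Sh_mul, Sh_one,
    coassoc, counitL, counitR, antiL, antiR⟩
  · intro i
    rw [Dh_E]
    rfl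
  · intro i
    rw [Sh_E]
    rfl

end
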